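/- A stellar subdivision preserves the boundary: if K is a complex with ∂K = 0 and K̂ = (A a)K is a stellar subdivision of K at a fresh vertex a, then ∂K̂ = 0. -/

import Mathlib

open Finset

/-- A `Chain` is a formal `ℤ/2`-sum of simplexes (finite sets of integer vertices). -/
abbrev Chain : Type := (Finset ℕ) →₀ ZMod 2

/-- Boundary of a single simplex: the sum of its codimension-1 faces. -/
noncomputable def sbnd (s : Finset ℕ) : Chain :=
  ∑ i ∈ s, Finsupp.single (s.erase i) 1

/-- The `ℤ/2` boundary operator, extended linearly to chains. -/
noncomputable def bnd (C : Chain) : Chain :=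
  C.sum fun s c => c • sbnd s

/-- Join of chains, defined bilinearly by union of vertex sets on simplexes. -/
noncomputable def joinC (K L : Chain) : Chain :=
  K.sum fun A a => L.sum fun B b => Finsupp.single (A ∪ B) (a * b)

/-- The link `lk(A,K)`. -/
noncomputable def lkC (A : Finset ℕ) (K : Chain) : Chain :=
  K.sum fun g c => if A ⊆ g then Finsupp.single (g \ A) c else 0

/-- `Q(A,K)`: the sum of generators of `K` not containing `A`. -/
noncomputable def QC (A : Finset ℕ) (K : Chain) : Chain :=
  K.sum fun g c => if A ⊆ g then 0 else Finsupp.single g c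

/-- Stellar subdivision `(A a)K = a ⋆ ∂A ⋆ lk(A,K) + Q(A,K)`. -/
noncomputable def subdivC (A : Finset ℕ) (a : ℕ) (K : Chain) : Chain :=
  joinC (Finsupp.single {a} 1) (joinC (sbnd A) (lkC A K)) + QC A K

/-- Stellar weld `(A a)⁻¹ K = A ⋆ B + Q(a,K)` (for `lk(a,K) = ∂A ⋆ B`). -/
noncomputable def weldC (A : Finset ℕ) (a : ℕ) (B K : Chain) : Chain :=
  joinC (Finsupp.single A 1) B + QC {a} K

/-- Relabeling of vertices by a map `f`. -/
noncomputable def renameC (f : ℕ → ℕ) (K : Chain) : Chain :=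
  K.sum fun g c => Finsupp.single (g.image f) c

/-- The set of vertices of a chain. -/
def vertsC (K : Chain) : Finset ℕ := K.support.sup id

/-- A stellar move: a subdivision, a weld, or a bijective relabeling of vertices. -/
inductive StellarMove : Chain → Chain → Prop
  | subdiv (A : Finset ℕ) (a : ℕ) (K : Chain)
      (hA : ∃ g ∈ K.support, A ⊆ g) (hA' : A.Nonempty)
      (ha : ∀ g ∈ K.support, a ∉ g) :
      StellarMove K (subdivC A a K)
  | weld (A : Finset ℕ) (a : ℕ) (B K : Chain)
      (hlk : lkC {a} K = joinC (sbnd A) B)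
      (hA : ∀ g ∈ K.support, ¬ A ⊆ g) (hA' : A.Nonempty) :
      StellarMove K (weldC A a B K)
  | relabel (f : ℕ → ℕ) (hf : Function.Bijective f) (K : Chain) :
      StellarMove K (renameC f K)

/-- Stellar equivalence: a finite sequence of stellar moves. -/
def StellarEquiv : Chain → Chain → Prop := Relation.ReflTransGen StellarMove

-- basic char-2 fact
lemma chain_add_self (x : Chain) : x + x = 0 := by
  have h : ((1 : ZMod 2) + 1) = 0 := by decide
  calc x + x = (1 : ZMod 2) • x + (1 : ZMod 2) • x := by rw [one_smul]
    _ = ((1 : ZMod 2) + 1) • x := (add_smul _ _ _).symm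
    _ = (0 : ZMod 2) • x := by rw [h]
    _ = 0 := zero_smul _ _

lemma zmod2_cases : ∀ c : ZMod 2, c = 0 ∨ c = 1 := by decide

-- bnd basics
lemma bnd_zero : bnd 0 = 0 := Finsupp.sum_zero_index

lemma bnd_add (C D : Chain) : bnd (C + D) = bnd C + bnd D :=
  Finsupp.sum_add_index' (fun s => zero_smul _ _) (fun s b₁ b₂ => add_smul b₁ b₂ _)

lemma bnd_single (s : Finset ℕ) (c : ZMod 2) : bnd (Finsupp.single s c) = c • sbnd s :=
  Finsupp.sum_single_index (zero_smul _ _)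

noncomputable def bndHom : Chain →+ Chain := AddMonoidHom.mk' bnd bnd_add

lemma bnd_sum {ι : Type*} (s : Finset ι) (f : ι → Chain) :
    bnd (∑ i ∈ s, f i) = ∑ i ∈ s, bnd (f i) := map_sum bndHom f s

-- joinC basics
lemma join_zero_left (L : Chain) : joinC 0 L = 0 := Finsupp.sum_zero_index

lemma join_add_left (K K' L : Chain) : joinC (K + K') L = joinC K L + joinC K' L :=
  Finsupp.sum_add_index' (fun A => by simp) (fun A b₁ b₂ => by
    simp [add_mul, Finsupp.single_add, Finsupp.sum_add])

lemma join_zero_right (K : Chain) : joinC K 0 = 0 := by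
  unfold joinC
  simp [Finsupp.sum_zero_index]

lemma join_add_right (K L L' : Chain) : joinC K (L + L') = joinC K L + joinC K L' := by
  unfold joinC
  rw [← Finsupp.sum_add]
  exact Finsupp.sum_congr fun A _ => Finsupp.sum_add_index' (fun B => by simp)
    (fun B b₁ b₂ => by simp [mul_add, Finsupp.single_add])

lemma join_single_single (A B : Finset ℕ) (x y : ZMod 2) :
    joinC (Finsupp.single A x) (Finsupp.single B y) = Finsupp.single (A ∪ B) (x * y) := by
  unfold joinC
  rw [Finsupp.sum_single_index (by simp), Finsupp.sum_single_index (by simp)]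

lemma join_smul_left (c : ZMod 2) (K L : Chain) : joinC (c • K) L = c • joinC K L := by
  rcases zmod2_cases c with h | h <;> subst h <;> simp [join_zero_left]

lemma join_smul_right (c : ZMod 2) (K L : Chain) : joinC K (c • L) = c • joinC K L := by
  rcases zmod2_cases c with h | h <;> subst h <;> simp [join_zero_right]

noncomputable def joinHomL (L : Chain) : Chain →+ Chain :=
  AddMonoidHom.mk' (fun K => joinC K L) (fun K K' => join_add_left K K' L)

noncomputable def joinHomR (K : Chain) : Chain →+ Chain :=
  AddMonoidHom.mk' (fun L => joinC K L) (fun L L' => join_add_right K L L')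

lemma join_sum_left {ι : Type*} (s : Finset ι) (f : ι → Chain) (L : Chain) :
    joinC (∑ i ∈ s, f i) L = ∑ i ∈ s, joinC (f i) L := map_sum (joinHomL L) f s

lemma join_sum_right {ι : Type*} (s : Finset ι) (K : Chain) (f : ι → Chain) :
    joinC K (∑ i ∈ s, f i) = ∑ i ∈ s, joinC K (f i) := map_sum (joinHomR K) f s

-- coefficient of sbnd
lemma sbnd_apply (t s : Finset ℕ) :
    sbnd t s = if s ⊆ t ∧ t.card = s.card + 1 then 1 else 0 := by
  unfold sbnd
  rw [Finset.sum_apply']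
  by_cases h : s ⊆ t ∧ t.card = s.card + 1
  · obtain ⟨hst, hcard⟩ := h
    have hne : (t \ s).Nonempty := by
      rw [← Finset.card_pos, Finset.card_sdiff_of_subset hst]; omega
    obtain ⟨x, hx⟩ := hne
    rw [Finset.mem_sdiff] at hx
    have hex : t.erase x = s := by
      refine (Finset.eq_of_subset_of_card_le ?_ ?_).symm
      · rw [Finset.subset_erase]; exact ⟨hst, hx.2⟩
      · rw [Finset.card_erase_of_mem hx.1]; omega
    rw [if_pos ⟨hst, hcard⟩]
    rw [Finset.sum_eq_single_of_mem x hx.1]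
    · rw [Finsupp.single_apply, if_pos hex]
    · intro i hi hne
      rw [Finsupp.single_apply, if_neg]
      intro he
      exact hx.2 (he ▸ Finset.mem_erase.2 ⟨hne.symm, hx.1⟩)
  · rw [if_neg h]
    apply Finset.sum_eq_zero
    intro i hi
    rw [Finsupp.single_apply, if_neg]
    intro he
    apply h
    refine ⟨he ▸ Finset.erase_subset _ _, ?_⟩
    have h1 : (t.erase i).card = t.card - 1 := Finset.card_erase_of_mem hi
    have h2 : 1 ≤ t.card := Finset.card_pos.2 ⟨i, hi⟩
    rw [he] at h1; omega

-- coefficient of lk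
lemma lk_apply (A : Finset ℕ) (K : Chain) (t : Finset ℕ) :
    lkC A K t = if Disjoint A t then K (A ∪ t) else 0 := by
  unfold lkC
  rw [Finsupp.sum_apply]
  have hterm : ∀ g ∈ K.support,
      (if A ⊆ g then Finsupp.single (g \ A) (K g) else 0 : Chain) t
        = if Disjoint A t then (if g = A ∪ t then K g else 0) else 0 := by
    intro g _
    by_cases hg : A ⊆ g
    · rw [if_pos hg, Finsupp.single_apply]
      by_cases hd : Disjoint A t
      · rw [if_pos hd]
        by_cases he : g = A ∪ t
        · subst he
          rw [if_pos (Finset.union_sdiff_cancel_left hd), if_pos rfl]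
        · rw [if_neg he, if_neg]
          intro hgt
          exact he (by rw [← hgt, Finset.union_sdiff_of_subset hg])
      · rw [if_neg hd, if_neg]
        intro hgt
        exact hd (hgt ▸ Finset.disjoint_sdiff)
    · rw [if_neg hg, Finsupp.coe_zero, Pi.zero_apply]
      by_cases hd : Disjoint A t
      · rw [if_pos hd, if_neg]
        intro he; exact hg (he ▸ Finset.subset_union_left)
      · rw [if_neg hd]
  rw [Finsupp.sum, Finset.sum_congr rfl hterm]
  by_cases hd : Disjoint A t
  · simp only [if_pos hd]
    rw [Finset.sum_ite_eq' K.support (A ∪ t) (fun g => K g)]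
    by_cases hm : A ∪ t ∈ K.support
    · rw [if_pos hm]
    · rw [if_neg hm, eq_comm]
      exact Finsupp.notMem_support_iff.1 hm
  · simp [hd]

lemma bnd_apply' (C : Chain) (s : Finset ℕ) (F : Finset (Finset ℕ)) (hF : C.support ⊆ F) :
    bnd C s = ∑ t ∈ F, if s ⊆ t ∧ t.card = s.card + 1 then C t else 0 := by
  unfold bnd
  rw [Finsupp.sum_apply, Finsupp.sum]
  have : ∀ t ∈ C.support, (C t • sbnd t) s
      = if s ⊆ t ∧ t.card = s.card + 1 then C t else 0 := by
    intro t _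
    rw [Finsupp.smul_apply, sbnd_apply, smul_eq_mul, mul_ite, mul_one, mul_zero]
  rw [Finset.sum_congr rfl this]
  apply Finset.sum_subset hF
  intro t _ ht
  rw [Finsupp.notMem_support_iff.1 ht, ite_self]

-- support lemmas
lemma supp_sbnd {A t : Finset ℕ} (h : t ∈ (sbnd A).support) : t ⊆ A := by
  have := Finsupp.mem_support_iff.1 h
  rw [sbnd_apply] at this
  by_contra hc
  exact this (if_neg (fun h' => hc h'.1))

lemma supp_lk {A : Finset ℕ} {K : Chain} {t : Finset ℕ} (h : t ∈ (lkC A K).support) :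
    Disjoint A t ∧ A ∪ t ∈ K.support := by
  have := Finsupp.mem_support_iff.1 h
  rw [lk_apply] at this
  by_cases hd : Disjoint A t
  · rw [if_pos hd] at this
    exact ⟨hd, Finsupp.mem_support_iff.2 this⟩
  · exact absurd (if_neg hd) (fun h' => this h')

lemma supp_join {X Y : Chain} {s : Finset ℕ} (h : s ∈ (joinC X Y).support) :
    ∃ A ∈ X.support, ∃ B ∈ Y.support, s = A ∪ B := by
  by_contra hc
  push_neg at hc
  apply Finsupp.mem_support_iff.1 h
  unfold joinC
  rw [Finsupp.sum_apply]
  rw [Finsupp.sum, Finset.sum_congr rfl (fun A hA => Finsupp.sum_apply)]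
  apply Finset.sum_eq_zero
  intro A hA
  rw [Finsupp.sum]
  apply Finset.sum_eq_zero
  intro B hB
  rw [Finsupp.single_apply, if_neg]
  intro he
  exact hc A hA B hB he.symm

-- Leibniz for single simplexes
lemma sbnd_union (A B : Finset ℕ) (h : Disjoint A B) :
    sbnd (A ∪ B) = joinC (sbnd A) (Finsupp.single B 1)
      + joinC (Finsupp.single A 1) (sbnd B) := by
  unfold sbnd
  rw [Finset.sum_union h, join_sum_left, join_sum_right]
  congr 1
  · apply Finset.sum_congr rfl
    intro i hi
    rw [join_single_single, mul_one, Finset.erase_union_distrib,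
      Finset.erase_eq_of_notMem (fun hc => Finset.disjoint_left.1 h hi hc)]
  · apply Finset.sum_congr rfl
    intro i hi
    rw [join_single_single, one_mul, Finset.erase_union_distrib,
      Finset.erase_eq_of_notMem (fun hc => Finset.disjoint_right.1 h hi hc)]

lemma bnd_join_single_single (A B : Finset ℕ) (x y : ZMod 2) (h : Disjoint A B) :
    bnd (joinC (Finsupp.single A x) (Finsupp.single B y))
      = joinC (bnd (Finsupp.single A x)) (Finsupp.single B y)
        + joinC (Finsupp.single A x) (bnd (Finsupp.single B y)) := by
  rw [join_single_single, bnd_single, bnd_single, bnd_single, sbnd_union A B h]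
  have h1 : Finsupp.single A x = x • Finsupp.single A (1 : ZMod 2) := by
    rw [Finsupp.smul_single', mul_one]
  have h2 : Finsupp.single B y = y • Finsupp.single B (1 : ZMod 2) := by
    rw [Finsupp.smul_single', mul_one]
  rw [smul_add]
  congr 1
  · rw [join_smul_left, h2, join_smul_right, smul_smul]
  · rw [join_smul_right, h1, join_smul_left, smul_smul, mul_comm y x]

lemma bnd_join_single (A : Finset ℕ) (x : ZMod 2) (Y : Chain)
    (h : ∀ B ∈ Y.support, Disjoint A B) :
    bnd (joinC (Finsupp.single A x) Y)
      = joinC (bnd (Finsupp.single A x)) Y + joinC (Finsupp.single A x) (bnd Y) := by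
  induction Y using Finsupp.induction with
  | zero => simp [join_zero_right, bnd_zero]
  | single_add B y f hBf hy ih =>
    have hsupp : (Finsupp.single B y + f).support = insert B f.support := by
      rw [Finsupp.support_add_eq, Finsupp.support_single_ne_zero B hy]
      · exact (Finset.insert_eq _ _).symm
      · rw [Finsupp.support_single_ne_zero B hy]
        exact Finset.disjoint_singleton_left.2 hBf
    have hAB : Disjoint A B := h B (by rw [hsupp]; exact Finset.mem_insert_self B _)
    have hf : ∀ B' ∈ f.support, Disjoint A B' := fun B' hB' =>
      h B' (by rw [hsupp]; exact Finset.mem_insert_of_mem hB')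
    rw [join_add_right, bnd_add, bnd_add, join_add_right, join_add_right, ih hf,
      bnd_join_single_single A B x y hAB]
    abel

lemma bnd_join (X Y : Chain)
    (h : ∀ A ∈ X.support, ∀ B ∈ Y.support, Disjoint A B) :
    bnd (joinC X Y) = joinC (bnd X) Y + joinC X (bnd Y) := by
  induction X using Finsupp.induction with
  | zero => simp [join_zero_left, bnd_zero]
  | single_add A x f hAf hx ih =>
    have hsupp : (Finsupp.single A x + f).support = insert A f.support := by
      rw [Finsupp.support_add_eq, Finsupp.support_single_ne_zero A hx]
      · exact (Finset.insert_eq _ _).symm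
      · rw [Finsupp.support_single_ne_zero A hx]
        exact Finset.disjoint_singleton_left.2 hAf
    have hA : ∀ B ∈ Y.support, Disjoint A B := fun B hB =>
      h A (by rw [hsupp]; exact Finset.mem_insert_self A _) B hB
    have hf : ∀ A' ∈ f.support, ∀ B ∈ Y.support, Disjoint A' B := fun A' hA' B hB =>
      h A' (by rw [hsupp]; exact Finset.mem_insert_of_mem hA') B hB
    rw [join_add_left, bnd_add, bnd_add, join_add_left, join_add_left, ih hf,
      bnd_join_single A x Y hA]
    abel

lemma bnd_sbnd (A : Finset ℕ) : bnd (sbnd A) = 0 := by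
  unfold sbnd
  rw [bnd_sum]
  have h1 : ∀ i ∈ A, bnd (Finsupp.single (A.erase i) (1 : ZMod 2)) = sbnd (A.erase i) :=
    fun i _ => by rw [bnd_single, one_smul]
  rw [Finset.sum_congr rfl h1]
  have h2 : ∀ i ∈ A, sbnd (A.erase i)
      = ∑ j ∈ A.erase i, Finsupp.single ((A.erase i).erase j) (1 : ZMod 2) := fun i _ => rfl
  rw [Finset.sum_congr rfl h2, Finset.sum_sigma']
  apply Finset.sum_involution (fun p _ => ⟨p.2, p.1⟩)
  · intro p hp
    rw [Finset.mem_sigma] at hp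
    have : (A.erase p.1).erase p.2 = (A.erase p.2).erase p.1 := Finset.erase_right_comm
    rw [this]
    exact chain_add_self _
  · intro p hp h
    intro hc
    have := congrArg Sigma.fst hc
    simp only at this
    rw [Finset.mem_sigma] at hp
    exact Finset.ne_of_mem_erase hp.2 this
  · intro p hp
    rfl
  · intro p hp
    rw [Finset.mem_sigma] at hp ⊢
    refine ⟨Finset.mem_of_mem_erase hp.2, Finset.mem_erase.2 ⟨?_, hp.1⟩⟩
    exact fun hc => Finset.ne_of_mem_erase hp.2 hc.symm

lemma bnd_lk (A : Finset ℕ) (K : Chain) (hK : bnd K = 0) : bnd (lkC A K) = 0 := by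
  ext s
  rw [Finsupp.coe_zero, Pi.zero_apply]
  have hF : (lkC A K).support ⊆ (K.support.filter (fun g => A ⊆ g)).image (· \ A) := by
    intro t ht
    obtain ⟨hd, hm⟩ := supp_lk ht
    exact Finset.mem_image.2 ⟨A ∪ t, Finset.mem_filter.2 ⟨hm, Finset.subset_union_left⟩,
      Finset.union_sdiff_cancel_left hd⟩
  rw [bnd_apply' _ s _ hF]
  by_cases hAs : Disjoint A s
  · have h0 : bnd K (A ∪ s) = 0 := by rw [hK]; rfl
    rw [bnd_apply' K (A ∪ s) K.support (le_refl _)] at h0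
    rw [← Finset.sum_filter] at h0 ⊢
    rw [← h0]
    apply Finset.sum_nbij' (fun t => A ∪ t) (fun g => g \ A)
    · -- hi : maps into
      intro t ht
      rw [Finset.mem_filter] at ht ⊢
      obtain ⟨htF, hst, hcard⟩ := ht
      obtain ⟨g, hg, rfl⟩ := Finset.mem_image.1 htF
      rw [Finset.mem_filter] at hg
      obtain ⟨hgm, hAg⟩ := hg
      have hgu : A ∪ g \ A = g := Finset.union_sdiff_of_subset hAg
      have hdA : Disjoint A (g \ A) := Finset.disjoint_sdiff
      refine ⟨?_, ?_, ?_⟩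
      · rw [hgu]; exact hgm
      · rw [hgu]
        exact Finset.union_subset hAg (hst.trans Finset.sdiff_subset)
      · rw [hgu, ← Finset.union_sdiff_of_subset hAg, Finset.card_union_of_disjoint hdA,
          Finset.card_union_of_disjoint hAs, hcard]
        omega
    · -- hj
      intro g hg
      rw [Finset.mem_filter] at hg
      obtain ⟨hgm, hsub, hcard⟩ := hg
      have hAg : A ⊆ g := Finset.union_subset_iff.1 hsub |>.1
      have hsg : s ⊆ g := Finset.union_subset_iff.1 hsub |>.2
      rw [Finset.mem_filter]
      constructor
      · exact Finset.mem_image.2 ⟨g, Finset.mem_filter.2 ⟨hgm, hAg⟩, rfl⟩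
      constructor
      · rw [Finset.subset_sdiff]
        exact ⟨hsg, hAs.symm⟩
      · have h1 : A.card + (g \ A).card = g.card := by
          rw [← Finset.card_union_of_disjoint Finset.disjoint_sdiff,
            Finset.union_sdiff_of_subset hAg]
        rw [Finset.card_union_of_disjoint hAs] at hcard
        omega
    · intro t ht
      rw [Finset.mem_filter] at ht
      obtain ⟨g, hg, rfl⟩ := Finset.mem_image.1 ht.1
      exact Finset.union_sdiff_cancel_left Finset.disjoint_sdiff
    · intro g hg
      rw [Finset.mem_filter] at hg
      have hAg : A ⊆ g := Finset.union_subset_iff.1 hg.2.1 |>.1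
      exact Finset.union_sdiff_of_subset hAg
    · intro t ht
      rw [Finset.mem_filter] at ht
      obtain ⟨g, hg, rfl⟩ := Finset.mem_image.1 ht.1
      rw [lk_apply, if_pos Finset.disjoint_sdiff]
  · apply Finset.sum_eq_zero
    intro t ht
    obtain ⟨g, hg, rfl⟩ := Finset.mem_image.1 ht
    rw [if_neg]
    rintro ⟨hst, -⟩
    exact hAs (Finset.disjoint_of_subset_right hst Finset.disjoint_sdiff)

lemma decomp (A : Finset ℕ) (K : Chain) :
    joinC (Finsupp.single A 1) (lkC A K) + QC A K = K := by
  have h1 : joinC (Finsupp.single A 1) (lkC A K)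
      = K.sum fun g c => if A ⊆ g then Finsupp.single g c else 0 := by
    unfold joinC
    rw [Finsupp.sum_single_index (by simp)]
    unfold lkC
    rw [Finsupp.sum_sum_index (fun B => by simp) (fun B b₁ b₂ => by
      rw [mul_add, Finsupp.single_add])]
    apply Finsupp.sum_congr
    intro g hg
    by_cases hAg : A ⊆ g
    · rw [if_pos hAg, if_pos hAg, Finsupp.sum_single_index (by simp), one_mul,
        Finset.union_sdiff_of_subset hAg]
    · rw [if_neg hAg, if_neg hAg, Finsupp.sum_zero_index]
  rw [h1]
  unfold QC
  rw [← Finsupp.sum_add]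
  have h2 : (K.sum fun g c => (if A ⊆ g then Finsupp.single g c else 0)
      + (if A ⊆ g then 0 else Finsupp.single g c)) = K.sum fun g c => Finsupp.single g c := by
    apply Finsupp.sum_congr
    intro g hg
    by_cases hAg : A ⊆ g <;> simp [hAg]
  rw [h2, Finsupp.sum_single]

lemma join_empty (Z : Chain) : joinC (Finsupp.single ∅ 1) Z = Z := by
  unfold joinC
  rw [Finsupp.sum_single_index (by simp)]
  simp only [Finset.empty_union, one_mul]
  exact Finsupp.sum_single Z

lemma sbnd_singleton (a : ℕ) : sbnd {a} = Finsupp.single ∅ 1 := by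
  unfold sbnd
  rw [Finset.sum_singleton, Finset.erase_singleton]

/-- a stellar subdivision at a fresh vertex preserves closedness. -/
theorem subdivision_preserves_closed (K : Chain) (A : Finset ℕ) (a : ℕ)
    (hA : ∃ g ∈ K.support, A ⊆ g) (hA' : A.Nonempty)
    (ha : ∀ g ∈ K.support, a ∉ g)
    (hK : bnd K = 0) :
    bnd (subdivC A a K) = 0 := by
  obtain ⟨g₀, hg₀, hAg₀⟩ := hA
  have haA : a ∉ A := fun hc => ha g₀ hg₀ (hAg₀ hc)
  set L := lkC A K with hL
  set S := sbnd A with hS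
  have hLsupp : ∀ B ∈ L.support, Disjoint A B := fun B hB => (supp_lk hB).1
  have hLa : ∀ B ∈ L.support, a ∉ B := by
    intro B hB
    obtain ⟨hd, hm⟩ := supp_lk hB
    exact fun hc => ha _ hm (Finset.mem_union_right _ hc)
  have hSsub : ∀ t ∈ S.support, t ⊆ A := fun t ht => supp_sbnd ht
  have hbL : bnd L = 0 := bnd_lk A K hK
  have hbS : bnd S = 0 := bnd_sbnd A
  have hSL : bnd (joinC S L) = 0 := by
    rw [bnd_join S L (fun A' hA' B hB =>
      Finset.disjoint_of_subset_left (hSsub A' hA') (hLsupp B hB)),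
      hbL, hbS, join_zero_left, join_zero_right, add_zero]
  have hQ : bnd (QC A K) = joinC S L := by
    have hd := congrArg bnd (decomp A K)
    rw [bnd_add, hK] at hd
    have hj : bnd (joinC (Finsupp.single A 1) L) = joinC S L := by
      have hdisj : ∀ A' ∈ (Finsupp.single A (1 : ZMod 2)).support,
          ∀ B ∈ L.support, Disjoint A' B := by
        intro A' hA' B hB
        have hAe : A' = A := Finset.mem_singleton.1
          (by rwa [Finsupp.support_single_ne_zero A one_ne_zero] at hA')
        exact hAe ▸ hLsupp B hB
      rw [bnd_join _ _ hdisj, hbL, join_zero_right, add_zero, bnd_single, one_smul]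
    calc bnd (QC A K)
        = bnd (joinC (Finsupp.single A 1) L)
          + (bnd (joinC (Finsupp.single A 1) L) + bnd (QC A K)) := by
          rw [← add_assoc, chain_add_self, zero_add]
      _ = bnd (joinC (Finsupp.single A 1) L) := by rw [hd, add_zero]
      _ = joinC S L := hj
  have hdisj2 : ∀ A' ∈ (Finsupp.single {a} (1 : ZMod 2)).support,
      ∀ B ∈ (joinC S L).support, Disjoint A' B := by
    intro A' hA' B hB
    have hA'a : A' = {a} := Finset.mem_singleton.1
      (by rwa [Finsupp.support_single_ne_zero _ one_ne_zero] at hA')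
    obtain ⟨A1, hA1, B1, hB1, rfl⟩ := supp_join hB
    subst hA'a
    rw [Finset.disjoint_singleton_left, Finset.mem_union]
    rintro (h1 | h2)
    · exact haA (hSsub A1 hA1 h1)
    · exact hLa B1 hB1 h2
  unfold subdivC
  rw [← hS, ← hL, bnd_add, hQ, bnd_join _ _ hdisj2, hSL, join_zero_right, add_zero,
    bnd_single, one_smul, sbnd_singleton, join_empty]
  exact chain_add_self (joinC S L)
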